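/- Let p be a prime, k an even integer ≥ 2, and let α, β be the roots of x^2 - ax + p^{k-1} over ℂ with a ∈ ℤ and a^2 - 4p^{k-1} ≠ 0. Suppose u ≥ 1 is the least positive integer with α^{u+1} = β^{u+1}. Then u is odd. -/
import Mathlib

/-- Lucas sequence `S n = α^n + β^n` where `α+β = a`, `αβ = q`. -/
def lucasS (a q : ℤ) : ℕ → ℤ
  | 0 => 2
  | 1 => a
  | (n + 2) => a * lucasS a q (n + 1) - q * lucasS a q n

lemma lucasS_eq (a q : ℤ) (α β : ℂ) (hsum : α + β = (a : ℂ)) (hprod : α * β = (q : ℂ)) :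
    ∀ n : ℕ, (lucasS a q n : ℂ) = α ^ n + β ^ n
  | 0 => by simp [lucasS]; norm_num
  | 1 => by simp [lucasS, ← hsum]
  | (n + 2) => by
    have h1 := lucasS_eq a q α β hsum hprod (n + 1)
    have h2 := lucasS_eq a q α β hsum hprod n
    simp only [lucasS]
    push_cast
    rw [h1, h2, ← hsum, ← hprod]
    ring

/-- Let `p` be prime, `k ≥ 2` even, and `α, β ∈ ℂ` the roots of `x^2 - a x + p^(k-1)`
with `a ∈ ℤ` and nonzero discriminant. If `u ≥ 1` is the least positive integer with
`α^(u+1) = β^(u+1)`, then `u` is odd. -/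
theorem stmt_2 (p k : ℕ) (hp : p.Prime) (hk : Even k) (hk2 : 2 ≤ k)
    (a : ℤ) (α β : ℂ)
    (hsum : α + β = (a : ℂ)) (hprod : α * β = (p : ℂ) ^ (k - 1))
    (hdisc : a ^ 2 - 4 * (p : ℤ) ^ (k - 1) ≠ 0)
    (u : ℕ) (hu : 1 ≤ u) (hroot : α ^ (u + 1) = β ^ (u + 1))
    (hleast : ∀ v : ℕ, 1 ≤ v → α ^ (v + 1) = β ^ (v + 1) → u ≤ v) :
    Odd u := by
  by_contra hodd
  rw [Nat.not_odd_iff_even] at hodd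
  set q : ℤ := (p : ℤ) ^ (k - 1) with hq
  have hprod' : α * β = (q : ℂ) := by rw [hq]; push_cast; exact hprod
  set s : ℤ := lucasS a q (u + 1) with hs
  have hSeq : (s : ℂ) = α ^ (u + 1) + β ^ (u + 1) := lucasS_eq a q α β hsum hprod' (u + 1)
  -- s = 2 α^(u+1), so s^2 = 4 (αβ)^(u+1)
  have hsq : ((s ^ 2 : ℤ) : ℂ) = 4 * (q : ℂ) ^ (u + 1) := by
    push_cast
    rw [hSeq]
    have h4 : (α ^ (u + 1) + β ^ (u + 1)) ^ 2 = 4 * (α ^ (u + 1) * β ^ (u + 1)) := by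
      rw [hroot]; ring
    rw [h4, ← mul_pow, hprod']
  have hsqZ : s ^ 2 = 4 * q ^ (u + 1) := by exact_mod_cast hsq
  set N : ℕ := (k - 1) * (u + 1) with hN
  have hqpow : q ^ (u + 1) = (p : ℤ) ^ N := by rw [hq, ← pow_mul]
  rw [hqpow] at hsqZ
  -- N is odd
  have hk1 : Odd (k - 1) := Nat.Even.sub_odd (le_trans one_le_two hk2) hk odd_one
  have hNodd : Odd N := hk1.mul (hodd.add_one)
  -- 2 ∣ s
  have h2s : (2 : ℤ) ∣ s := by
    have : (2 : ℤ) ∣ s ^ 2 := ⟨2 * (p : ℤ) ^ N, by linarith⟩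
    exact Int.prime_two.dvd_of_dvd_pow this
  obtain ⟨t, ht⟩ := h2s
  have htsq : t ^ 2 = (p : ℤ) ^ N := by
    have : (2 * t) ^ 2 = 4 * (p : ℤ) ^ N := by rw [← ht]; exact hsqZ
    nlinarith [this]
  -- pass to ℕ
  have htn : t.natAbs ^ 2 = p ^ N := by
    have := congrArg Int.natAbs htsq
    simpa [Int.natAbs_pow] using this
  have htne : t.natAbs ≠ 0 := by
    intro h
    rw [h] at htn
    simp at htn
    exact pow_ne_zero N hp.pos.ne' htn.symm
  -- factorization parity
  have hfac := congrArg (fun m => m.factorization p) htn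
  simp only [Nat.factorization_pow, hp.factorization, Finsupp.smul_apply,
    Finsupp.single_eq_same, smul_eq_mul, mul_one] at hfac
  have : Even N := ⟨t.natAbs.factorization p, by omega⟩
  exact (Nat.not_even_iff_odd.mpr hNodd) this
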